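/- Let λ ≥ 2 be a real number and d ∈ ℕ. Consider a Galton–Watson process with Poisson(λ) offspring and let Z̃_d = Σ_{k=0}^d Z_k be its total population up to generation d. Then λ^{2d} ≤ E[(Z̃_d)^2] ≤ 2·(λ/(λ − 1))^3 · λ^{2d} ≤ 16·λ^{2d}. -/

import Mathlib

set_option maxHeartbeats 1000000
set_option linter.unusedSectionVars false
set_option linter.unusedVariables false
set_option linter.deprecated false

open MeasureTheory ProbabilityTheory
open scoped ENNReal

set_option maxHeartbeats 1000000
set_option linter.unusedSectionVars false
set_option linter.unusedVariables false


private noncomputable def gwA (l : ℝ) (s : ℕ) : ℝ := Real.exp (-l) * l ^ s / s.factorial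

section poisson
variable {l : ℝ}

private lemma gwA_nonneg (hl : 2 ≤ l) (s : ℕ) : 0 ≤ gwA l s := by
  unfold gwA; positivity

private lemma gw_shift (hl : 2 ≤ l) (s : ℕ) : ((s:ℝ)+1) * gwA l (s+1) = l * gwA l s := by
  unfold gwA
  have h1 : ((s+1).factorial : ℝ) = ((s:ℝ)+1) * s.factorial := by
    rw [Nat.factorial_succ]; push_cast; ring
  have h2 : (s.factorial : ℝ) ≠ 0 := Nat.cast_ne_zero.2 s.factorial_ne_zero
  have h3 : ((s:ℝ)+1) ≠ 0 := by positivity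
  rw [h1]; field_simp; ring

private lemma gw_sum_a (hl : 2 ≤ l) : HasSum (gwA l) 1 := by
  have h0 : (0:ℝ) ≤ l := by linarith
  have := ProbabilityTheory.poissonPMFRealSum ⟨l, h0⟩
  convert this using 1
  funext n
  simp [ProbabilityTheory.poissonPMFReal, gwA]; rfl

private lemma gw_m1_eq (hl : 2 ≤ l) :
    (fun s : ℕ => ((s+1 : ℕ):ℝ) * gwA l (s+1)) = fun s : ℕ => l * gwA l s := by
  funext s; push_cast; exact gw_shift hl s

private lemma gw_summable_m1 (hl : 2 ≤ l) : Summable (fun s : ℕ => (s:ℝ) * gwA l s) := by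
  rw [← summable_nat_add_iff 1]
  exact (gw_m1_eq hl) ▸ ((gw_sum_a hl).summable.mul_left l)

private lemma gw_tsum_m1 (hl : 2 ≤ l) : (∑' s : ℕ, (s:ℝ) * gwA l s) = l := by
  rw [Summable.tsum_eq_zero_add (gw_summable_m1 hl)]
  have : ∀ s : ℕ, ((s+1 : ℕ):ℝ) * gwA l (s+1) = l * gwA l s := fun s =>
    congrFun (gw_m1_eq hl) s
  calc ((0:ℕ):ℝ) * gwA l 0 + ∑' s : ℕ, ((s+1 : ℕ):ℝ) * gwA l (s+1)
      = ∑' s : ℕ, l * gwA l s := by rw [tsum_congr this]; simp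
    _ = l := by rw [tsum_mul_left, (gw_sum_a hl).tsum_eq, mul_one]

private lemma gw_m2_eq (hl : 2 ≤ l) :
    (fun s : ℕ => ((s+1 : ℕ):ℝ)^2 * gwA l (s+1))
      = fun s : ℕ => l * ((s:ℝ) * gwA l s) + l * gwA l s := by
  funext s
  have h := gw_shift hl s
  push_cast
  calc ((s:ℝ)+1)^2 * gwA l (s+1) = ((s:ℝ)+1) * (((s:ℝ)+1) * gwA l (s+1)) := by ring
    _ = ((s:ℝ)+1) * (l * gwA l s) := by rw [h]
    _ = l * ((s:ℝ) * gwA l s) + l * gwA l s := by ring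

private lemma gw_summable_m2 (hl : 2 ≤ l) : Summable (fun s : ℕ => ((s:ℝ))^2 * gwA l s) := by
  rw [← summable_nat_add_iff 1]
  exact (gw_m2_eq hl) ▸ (((gw_summable_m1 hl).mul_left l).add
    (((gw_sum_a hl).summable).mul_left l))

private lemma gw_tsum_m2 (hl : 2 ≤ l) : (∑' s : ℕ, ((s:ℝ))^2 * gwA l s) = l + l^2 := by
  rw [Summable.tsum_eq_zero_add (gw_summable_m2 hl)]
  have : ∀ s : ℕ, ((s+1 : ℕ):ℝ)^2 * gwA l (s+1) = l * ((s:ℝ) * gwA l s) + l * gwA l s :=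
    fun s => congrFun (gw_m2_eq hl) s
  calc ((0:ℕ):ℝ)^2 * gwA l 0 + ∑' s : ℕ, ((s+1 : ℕ):ℝ)^2 * gwA l (s+1)
      = ∑' s : ℕ, (l * ((s:ℝ) * gwA l s) + l * gwA l s) := by rw [tsum_congr this]; simp [mul_assoc]
    _ = l * (∑' s : ℕ, (s:ℝ) * gwA l s) + l * (∑' s : ℕ, gwA l s) := by
        rw [Summable.tsum_add ((gw_summable_m1 hl).mul_left l) (((gw_sum_a hl).summable).mul_left l),
          tsum_mul_left, tsum_mul_left]
    _ = l + l^2 := by rw [gw_tsum_m1 hl, (gw_sum_a hl).tsum_eq]; ring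
end poisson
section lint
variable {Ω : Type*} [MeasurableSpace Ω]





private lemma gw_lintegral_X (P : Measure Ω) {l : ℝ} (hl : 2 ≤ l)
    {Y : Ω → ℕ} (hY : Measurable Y)
    (hlaw : ∀ s : ℕ, P.map Y {s} = ENNReal.ofReal (gwA l s)) :
    ∫⁻ ω, (Y ω : ℝ≥0∞) ∂P = ENNReal.ofReal l := by
  have : ∫⁻ ω, (Y ω : ℝ≥0∞) ∂P = ∫⁻ n, (n : ℝ≥0∞) ∂(P.map Y) :=
    (lintegral_map measurable_from_nat hY).symm
  rw [this, lintegral_countable' (fun n : ℕ => (n:ℝ≥0∞))]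
  have h : ∀ n : ℕ, (n:ℝ≥0∞) * (P.map Y) {n} = ENNReal.ofReal ((n:ℝ) * gwA l n) := by
    intro n
    rw [hlaw n, ← ENNReal.ofReal_natCast n, ← ENNReal.ofReal_mul (Nat.cast_nonneg n)]
  rw [tsum_congr h, ← ENNReal.ofReal_tsum_of_nonneg
    (fun n => mul_nonneg (Nat.cast_nonneg n) (gwA_nonneg hl n)) (gw_summable_m1 hl),
    gw_tsum_m1 hl]

private lemma gw_lintegral_X_sq (P : Measure Ω) {l : ℝ} (hl : 2 ≤ l)
    {Y : Ω → ℕ} (hY : Measurable Y)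
    (hlaw : ∀ s : ℕ, P.map Y {s} = ENNReal.ofReal (gwA l s)) :
    ∫⁻ ω, ((Y ω : ℝ≥0∞))^2 ∂P = ENNReal.ofReal (l + l^2) := by
  have : ∫⁻ ω, ((Y ω : ℝ≥0∞))^2 ∂P = ∫⁻ n, ((n : ℝ≥0∞))^2 ∂(P.map Y) :=
    (lintegral_map (f := fun n : ℕ => ((n:ℝ≥0∞))^2) measurable_from_nat hY).symm
  rw [this, lintegral_countable' (fun n : ℕ => ((n:ℝ≥0∞))^2)]
  have h : ∀ n : ℕ, ((n:ℝ≥0∞))^2 * (P.map Y) {n} = ENNReal.ofReal (((n:ℝ))^2 * gwA l n) := by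
    intro n
    rw [hlaw n, ← ENNReal.ofReal_natCast n, ← ENNReal.ofReal_pow (Nat.cast_nonneg n),
      ← ENNReal.ofReal_mul (by positivity)]
  rw [tsum_congr h, ← ENNReal.ofReal_tsum_of_nonneg
    (fun n => mul_nonneg (by positivity) (gwA_nonneg hl n)) (gw_summable_m2 hl),
    gw_tsum_m2 hl]
end lint


private lemma gw_meas_comp {Ω : Type*} {M : MeasurableSpace Ω} {g : Ω → ℕ} {F : ℕ → Ω → ℕ}
    (hg : Measurable[M] g) (hF : ∀ n, Measurable[M] (F n)) :
    Measurable[M] (fun ω => F (g ω) ω) := by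
  apply measurable_to_countable'
  intro m
  have h : (fun ω => F (g ω) ω) ⁻¹' {m} = ⋃ n, (g ⁻¹' {n} ∩ (F n) ⁻¹' {m}) := by
    ext ω
    simp only [Set.mem_preimage, Set.mem_singleton_iff, Set.mem_iUnion, Set.mem_inter_iff]
    exact ⟨fun h => ⟨g ω, rfl, h⟩, fun ⟨n, h1, h2⟩ => h1 ▸ h2⟩
  rw [h]
  exact MeasurableSet.iUnion fun n =>
    (hg (measurableSet_singleton n)).inter (hF n (measurableSet_singleton m))

section gw
variable {Ω : Type*} [MeasurableSpace Ω] (P : Measure Ω) [IsProbabilityMeasure P]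
  (X : ℕ → ℕ → Ω → ℕ) (Z : ℕ → Ω → ℕ)

/-- σ-algebra generated by generations before `k`. -/
private def gwF (k : ℕ) : MeasurableSpace Ω :=
  ⨆ (p : ℕ × ℕ) (_ : p ∈ {q : ℕ × ℕ | q.1 < k}), MeasurableSpace.comap (X p.1 p.2) inferInstance

/-- σ-algebra generated by the offspring variables of generation `k`. -/
private def gwG (k : ℕ) : MeasurableSpace Ω :=
  ⨆ (p : ℕ × ℕ) (_ : p ∈ {q : ℕ × ℕ | q.1 = k}), MeasurableSpace.comap (X p.1 p.2) inferInstance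

variable {P X Z}

private lemma gwF_le (hXmeas : ∀ k i, Measurable (X k i)) (k : ℕ) :
    gwF X k ≤ ‹MeasurableSpace Ω› :=
  iSup₂_le fun p _ => (hXmeas p.1 p.2).comap_le

private lemma gwG_le (hXmeas : ∀ k i, Measurable (X k i)) (k : ℕ) :
    gwG X k ≤ ‹MeasurableSpace Ω› :=
  iSup₂_le fun p _ => (hXmeas p.1 p.2).comap_le

private lemma gwX_measF {j k : ℕ} (hjk : j < k) (i : ℕ) : Measurable[gwF X k] (X j i) :=
  measurable_iff_comap_le.2 (le_iSup₂ (f := fun (p : ℕ × ℕ) (_ : p ∈ {q : ℕ × ℕ | q.1 < k}) =>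
    MeasurableSpace.comap (X p.1 p.2) inferInstance) (j, i) hjk)

private lemma gwX_measG (k i : ℕ) : Measurable[gwG X k] (X k i) :=
  measurable_iff_comap_le.2 (le_iSup₂ (f := fun (p : ℕ × ℕ) (_ : p ∈ {q : ℕ × ℕ | q.1 = k}) =>
    MeasurableSpace.comap (X p.1 p.2) inferInstance) (k, i) rfl)

private lemma gwZ_measF (hZ0 : ∀ ω, Z 0 ω = 1)
    (hZrec : ∀ k ω, Z (k + 1) ω = ∑ i ∈ Finset.range (Z k ω), X k i ω)
    {j k : ℕ} (hjk : j ≤ k) : Measurable[gwF X k] (Z j) := by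
  induction j with
  | zero =>
    have : Z 0 = fun _ => 1 := funext hZ0
    rw [this]; exact measurable_const
  | succ j ih =>
    have hj : j ≤ k := Nat.le_of_succ_le hjk
    have hjlt : j < k := hjk
    have : Z (j+1) = fun ω => (fun n ω' => ∑ i ∈ Finset.range n, X j i ω') (Z j ω) ω :=
      funext fun ω => hZrec j ω
    rw [this]
    exact gw_meas_comp (ih hj) fun n =>
      Finset.measurable_sum (Finset.range n) (fun i _ => gwX_measF hjlt i)

private lemma gw_indepFG (hXmeas : ∀ k i, Measurable (X k i))
    (hXindep : iIndepFun (fun p : ℕ × ℕ => X p.1 p.2) P)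
    (k : ℕ) : Indep (gwF X k) (gwG X k) P := by
  have hi : iIndep (fun p : ℕ × ℕ => MeasurableSpace.comap (X p.1 p.2) inferInstance) P := by
    have := hXindep.iIndep
    exact this
  have hd : Disjoint {q : ℕ × ℕ | q.1 < k} {q : ℕ × ℕ | q.1 = k} := by
    rw [Set.disjoint_left]
    rintro ⟨a, b⟩ (h1 : a < k) (h2 : a = k)
    omega
  unfold gwF gwG
  exact indep_iSup_of_disjoint (m := fun p : ℕ × ℕ => MeasurableSpace.comap (X p.1 p.2) inferInstance)
    (S := {q : ℕ × ℕ | q.1 < k}) (T := {q : ℕ × ℕ | q.1 = k})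
    (fun p => (hXmeas p.1 p.2).comap_le) hi hd

/-- Expectation of a product of an `gwF k`-measurable and a `gwG k`-measurable
`ℝ≥0∞`-valued function factorizes. -/
private lemma gw_lintegral_mul (hXmeas : ∀ k i, Measurable (X k i))
    (hXindep : iIndepFun (fun p : ℕ × ℕ => X p.1 p.2) P)
    (k : ℕ) {f g : Ω → ℝ≥0∞} (hf : Measurable[gwF X k] f) (hg : Measurable[gwG X k] g) :
    ∫⁻ ω, f ω * g ω ∂P = (∫⁻ ω, f ω ∂P) * ∫⁻ ω, g ω ∂P := by
  have hindep : IndepFun f g P := by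
    have h := gw_indepFG hXmeas hXindep (P := P) k
    exact indep_of_indep_of_le_right
      (indep_of_indep_of_le_left h (measurable_iff_comap_le.1 hf))
      (measurable_iff_comap_le.1 hg)
  exact lintegral_mul_eq_lintegral_mul_lintegral_of_indepFun''
    ((hf.mono (gwF_le hXmeas k) le_rfl).aemeasurable)
    ((hg.mono (gwG_le hXmeas k) le_rfl).aemeasurable) hindep

/-- Partition the expectation over the values of `Z k`. -/
private lemma gw_partition {k : ℕ} {W : Ω → ℝ≥0∞} (hW : Measurable W)
    (hZk : Measurable (Z k)) (v : ℕ → ℝ≥0∞) :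
    ∑' n : ℕ, (∫⁻ ω, ({ω' | Z k ω' = n}.indicator W) ω ∂P) * v n
      = ∫⁻ ω, W ω * v (Z k ω) ∂P := by
  have hsets : ∀ n : ℕ, MeasurableSet {ω' | Z k ω' = n} := fun n =>
    hZk (measurableSet_singleton n)
  have hmeas : ∀ n : ℕ, Measurable (fun ω => ({ω' | Z k ω' = n}.indicator W) ω * v n) :=
    fun n => (hW.indicator (hsets n)).mul_const (v n)
  calc ∑' n : ℕ, (∫⁻ ω, ({ω' | Z k ω' = n}.indicator W) ω ∂P) * v n
      = ∑' n : ℕ, ∫⁻ ω, ({ω' | Z k ω' = n}.indicator W) ω * v n ∂P := by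
        refine tsum_congr fun n => ?_
        rw [lintegral_mul_const _ (hW.indicator (hsets n))]
    _ = ∫⁻ ω, ∑' n : ℕ, ({ω' | Z k ω' = n}.indicator W) ω * v n ∂P :=
        (lintegral_tsum fun n => (hmeas n).aemeasurable).symm
    _ = ∫⁻ ω, W ω * v (Z k ω) ∂P := by
        refine lintegral_congr fun ω => ?_
        rw [tsum_eq_single (Z k ω) ?_]
        · rw [Set.indicator_of_mem (by rfl : ω ∈ {ω' | Z k ω' = Z k ω})]
        · intro n hn
          have hmem : ω ∉ {ω' | Z k ω' = n} := fun h => hn (Eq.symm h)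
          rw [Set.indicator_of_notMem hmem, zero_mul]
private lemma gw_T_measG (k n : ℕ) :
    Measurable[gwG X k] (fun ω => ∑ i ∈ Finset.range n, X k i ω) :=
  Finset.measurable_sum (Finset.range n) fun i _ => gwX_measG k i

private lemma gw_step (hXmeas : ∀ k i, Measurable (X k i))
    (hXindep : iIndepFun (fun p : ℕ × ℕ => X p.1 p.2) P)
    (hZ0 : ∀ ω, Z 0 ω = 1)
    (hZrec : ∀ k ω, Z (k + 1) ω = ∑ i ∈ Finset.range (Z k ω), X k i ω)
    (k : ℕ) {W : Ω → ℝ≥0∞} (hW : Measurable[gwF X k] W) (g : ℕ → ℝ≥0∞) :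
    ∫⁻ ω, W ω * g (Z (k+1) ω) ∂P
      = ∑' n : ℕ, (∫⁻ ω, ({ω' | Z k ω' = n}.indicator W) ω ∂P)
          * ∫⁻ ω, g (∑ i ∈ Finset.range n, X k i ω) ∂P := by
  have hZkF : Measurable[gwF X k] (Z k) := gwZ_measF hZ0 hZrec le_rfl
  have hZk : Measurable (Z k) := hZkF.mono (gwF_le hXmeas k) le_rfl
  have hWa : Measurable W := hW.mono (gwF_le hXmeas k) le_rfl
  have hsets : ∀ n : ℕ, MeasurableSet {ω' | Z k ω' = n} := fun n =>
    hZk (measurableSet_singleton n)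
  have hsetsF : ∀ n : ℕ, MeasurableSet[gwF X k] {ω' | Z k ω' = n} := fun n =>
    hZkF (measurableSet_singleton n)
  have hT : ∀ n, Measurable (fun ω => g (∑ i ∈ Finset.range n, X k i ω)) := fun n =>
    measurable_from_nat.comp (Finset.measurable_sum (Finset.range n) fun i _ => hXmeas k i)
  have hpt : ∀ ω, W ω * g (Z (k+1) ω)
      = ∑' n : ℕ, {ω' | Z k ω' = n}.indicator
          (fun ω' => W ω' * g (∑ i ∈ Finset.range n, X k i ω')) ω := by
    intro ω
    rw [tsum_eq_single (Z k ω) ?_]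
    · rw [Set.indicator_of_mem (by rfl : ω ∈ {ω' | Z k ω' = Z k ω}), hZrec k ω]
    · intro n hn
      have hmem : ω ∉ {ω' | Z k ω' = n} := fun h => hn (Eq.symm h)
      rw [Set.indicator_of_notMem hmem]
  calc ∫⁻ ω, W ω * g (Z (k+1) ω) ∂P
      = ∫⁻ ω, ∑' n : ℕ, {ω' | Z k ω' = n}.indicator
          (fun ω' => W ω' * g (∑ i ∈ Finset.range n, X k i ω')) ω ∂P := lintegral_congr hpt
    _ = ∑' n : ℕ, ∫⁻ ω, {ω' | Z k ω' = n}.indicator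
          (fun ω' => W ω' * g (∑ i ∈ Finset.range n, X k i ω')) ω ∂P :=
        lintegral_tsum fun n => ((hWa.mul (hT n)).indicator (hsets n)).aemeasurable
    _ = ∑' n : ℕ, ∫⁻ ω, ({ω' | Z k ω' = n}.indicator W) ω
          * g (∑ i ∈ Finset.range n, X k i ω) ∂P := by
        refine tsum_congr fun n => lintegral_congr fun ω => ?_
        by_cases h : ω ∈ {ω' | Z k ω' = n}
        · rw [Set.indicator_of_mem h, Set.indicator_of_mem h]
        · rw [Set.indicator_of_notMem h, Set.indicator_of_notMem h, zero_mul]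
    _ = ∑' n : ℕ, (∫⁻ ω, ({ω' | Z k ω' = n}.indicator W) ω ∂P)
          * ∫⁻ ω, g (∑ i ∈ Finset.range n, X k i ω) ∂P :=
        tsum_congr fun n => gw_lintegral_mul hXmeas hXindep k (hW.indicator (hsetsF n))
          (Measurable.comp (measurable_from_nat (f := g)) (gw_T_measG k n))

private lemma gw_lintegral_T {l : ℝ} (hXmeas : ∀ k i, Measurable (X k i)) (hl : 2 ≤ l)
    (hXlaw : ∀ k i (s : ℕ), P.map (X k i) {s} = ENNReal.ofReal (gwA l s)) (k n : ℕ) :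
    ∫⁻ ω, ((∑ i ∈ Finset.range n, X k i ω : ℕ) : ℝ≥0∞) ∂P = n * ENNReal.ofReal l := by
  have hc : ∀ ω, ((∑ i ∈ Finset.range n, X k i ω : ℕ) : ℝ≥0∞)
      = ∑ i ∈ Finset.range n, ((X k i ω : ℕ) : ℝ≥0∞) := fun ω => Nat.cast_sum _ _
  have hXc : ∀ i : ℕ, Measurable (fun ω => ((X k i ω : ℕ) : ℝ≥0∞)) := fun i =>
    measurable_from_nat.comp (hXmeas k i)
  rw [lintegral_congr hc,
    lintegral_finset_sum _ (fun i _ => hXc i),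
    Finset.sum_congr rfl (fun i _ => gw_lintegral_X P hl (hXmeas k i) (hXlaw k i))]
  simp [Finset.sum_const, Finset.card_range, nsmul_eq_mul]

private lemma gw_lintegral_T_sq {l : ℝ} (hXmeas : ∀ k i, Measurable (X k i))
    (hXindep : iIndepFun (fun p : ℕ × ℕ => X p.1 p.2) P)
    (hl : 2 ≤ l)
    (hXlaw : ∀ k i (s : ℕ), P.map (X k i) {s} = ENNReal.ofReal (gwA l s)) (k n : ℕ) :
    ∫⁻ ω, ((∑ i ∈ Finset.range n, X k i ω : ℕ) : ℝ≥0∞)^2 ∂P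
      = (n : ℝ≥0∞) * ENNReal.ofReal l + ((n : ℝ≥0∞) * ENNReal.ofReal l)^2 := by
  have hl0 : (0:ℝ) ≤ l := by linarith
  set L := ENNReal.ofReal l with hL
  have hXc : ∀ i, Measurable (fun ω => ((X k i ω : ℕ) : ℝ≥0∞)) := fun i =>
    measurable_from_nat.comp (hXmeas k i)
  have hpt : ∀ ω, ((∑ i ∈ Finset.range n, X k i ω : ℕ) : ℝ≥0∞)^2
      = ∑ i ∈ Finset.range n, ∑ j ∈ Finset.range n,
          ((X k i ω : ℕ) : ℝ≥0∞) * ((X k j ω : ℕ) : ℝ≥0∞) := by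
    intro ω
    rw [pow_two, Nat.cast_sum, Finset.sum_mul_sum]
  rw [lintegral_congr hpt,
    lintegral_finset_sum _ (f := fun i ω => ∑ j ∈ Finset.range n,
      ((X k i ω : ℕ) : ℝ≥0∞) * ((X k j ω : ℕ) : ℝ≥0∞)) (fun i _ => Finset.measurable_sum _ (fun j _ => (hXc i).mul (hXc j)))]
  have hterm : ∀ i ∈ Finset.range n, ∀ j ∈ Finset.range n,
      ∫⁻ ω, ((X k i ω : ℕ) : ℝ≥0∞) * ((X k j ω : ℕ) : ℝ≥0∞) ∂P
        = L^2 + if i = j then L else 0 := by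
    intro i _ j _
    by_cases hij : i = j
    · subst hij
      have : ∀ ω, ((X k i ω : ℕ) : ℝ≥0∞) * ((X k i ω : ℕ) : ℝ≥0∞)
          = ((X k i ω : ℕ) : ℝ≥0∞)^2 := fun ω => (pow_two _).symm
      rw [lintegral_congr this, gw_lintegral_X_sq P hl (hXmeas k i) (hXlaw k i)]
      rw [ENNReal.ofReal_add hl0 (by positivity), ENNReal.ofReal_pow hl0]
      simp [hL, pow_two]
      ring
    · have hne : ((k, i) : ℕ × ℕ) ≠ (k, j) := by simp [hij]
      have hind : IndepFun (X k i) (X k j) P := hXindep.indepFun hne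
      have hind' : IndepFun (fun ω => ((X k i ω : ℕ) : ℝ≥0∞))
          (fun ω => ((X k j ω : ℕ) : ℝ≥0∞)) P :=
        hind.comp (measurable_from_nat (f := fun m : ℕ => (m : ℝ≥0∞)))
          (measurable_from_nat (f := fun m : ℕ => (m : ℝ≥0∞)))
      rw [lintegral_mul_eq_lintegral_mul_lintegral_of_indepFun'' (hXc i).aemeasurable
        (hXc j).aemeasurable hind',
        gw_lintegral_X P hl (hXmeas k i) (hXlaw k i),
        gw_lintegral_X P hl (hXmeas k j) (hXlaw k j)]
      simp [hij, pow_two, hL]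
  have hinner : ∀ i ∈ Finset.range n,
      ∫⁻ ω, ∑ j ∈ Finset.range n, ((X k i ω : ℕ) : ℝ≥0∞) * ((X k j ω : ℕ) : ℝ≥0∞) ∂P
        = ∑ j ∈ Finset.range n, (L^2 + if i = j then L else 0) := by
    intro i hi
    rw [lintegral_finset_sum _ (f := fun j ω => ((X k i ω : ℕ) : ℝ≥0∞) * ((X k j ω : ℕ) : ℝ≥0∞))
      (fun j _ => (hXc i).mul (hXc j))]
    exact Finset.sum_congr rfl fun j hj => hterm i hi j hj
  rw [Finset.sum_congr rfl hinner]
  simp only [Finset.sum_add_distrib, Finset.sum_const, Finset.card_range, nsmul_eq_mul,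
    Finset.sum_ite_eq, Finset.mem_range]
  rw [Finset.sum_ite_of_true (fun i hi => Finset.mem_range.1 hi)]
  simp only [Finset.sum_const, Finset.card_range, nsmul_eq_mul]
  ring

private lemma gw_E1 {l : ℝ} (hXmeas : ∀ k i, Measurable (X k i))
    (hXindep : iIndepFun (fun p : ℕ × ℕ => X p.1 p.2) P)
    (hl : 2 ≤ l)
    (hXlaw : ∀ k i (s : ℕ), P.map (X k i) {s} = ENNReal.ofReal (gwA l s))
    (hZ0 : ∀ ω, Z 0 ω = 1)
    (hZrec : ∀ k ω, Z (k + 1) ω = ∑ i ∈ Finset.range (Z k ω), X k i ω)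
    (k : ℕ) {W : Ω → ℝ≥0∞} (hW : Measurable[gwF X k] W) :
    ∫⁻ ω, W ω * ((Z (k+1) ω : ℕ) : ℝ≥0∞) ∂P
      = ENNReal.ofReal l * ∫⁻ ω, W ω * ((Z k ω : ℕ) : ℝ≥0∞) ∂P := by
  have hZk : Measurable (Z k) :=
    (gwZ_measF hZ0 hZrec le_rfl).mono (gwF_le hXmeas k) le_rfl
  have hWa : Measurable W := hW.mono (gwF_le hXmeas k) le_rfl
  have h := gw_step hXmeas hXindep hZ0 hZrec k hW (fun n => ((n : ℕ) : ℝ≥0∞))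
  rw [h, tsum_congr (fun n => by
    rw [gw_lintegral_T hXmeas hl hXlaw k n] :
      ∀ n : ℕ, (∫⁻ ω, ({ω' | Z k ω' = n}.indicator W) ω ∂P)
        * (∫⁻ ω, ((∑ i ∈ Finset.range n, X k i ω : ℕ) : ℝ≥0∞) ∂P)
      = (∫⁻ ω, ({ω' | Z k ω' = n}.indicator W) ω ∂P) * ((n : ℝ≥0∞) * ENNReal.ofReal l)),
    gw_partition hWa hZk (fun n => (n : ℝ≥0∞) * ENNReal.ofReal l)]
  have hmZ : Measurable (fun ω => ((Z k ω : ℕ) : ℝ≥0∞)) := measurable_from_nat.comp hZk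
  calc ∫⁻ ω, W ω * ((Z k ω : ℝ≥0∞) * ENNReal.ofReal l) ∂P
      = ∫⁻ ω, (W ω * (Z k ω : ℝ≥0∞)) * ENNReal.ofReal l ∂P := by
        refine lintegral_congr fun ω => ?_; ring
    _ = (∫⁻ ω, W ω * ((Z k ω : ℕ) : ℝ≥0∞) ∂P) * ENNReal.ofReal l :=
        lintegral_mul_const _ (hWa.mul hmZ)
    _ = ENNReal.ofReal l * ∫⁻ ω, W ω * ((Z k ω : ℕ) : ℝ≥0∞) ∂P := mul_comm _ _

private lemma gw_E2 {l : ℝ} (hXmeas : ∀ k i, Measurable (X k i))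
    (hXindep : iIndepFun (fun p : ℕ × ℕ => X p.1 p.2) P)
    (hl : 2 ≤ l)
    (hXlaw : ∀ k i (s : ℕ), P.map (X k i) {s} = ENNReal.ofReal (gwA l s))
    (hZ0 : ∀ ω, Z 0 ω = 1)
    (hZrec : ∀ k ω, Z (k + 1) ω = ∑ i ∈ Finset.range (Z k ω), X k i ω)
    (k : ℕ) {W : Ω → ℝ≥0∞} (hW : Measurable[gwF X k] W) :
    ∫⁻ ω, W ω * ((Z (k+1) ω : ℕ) : ℝ≥0∞)^2 ∂P
      = (ENNReal.ofReal l)^2 * ∫⁻ ω, W ω * ((Z k ω : ℕ) : ℝ≥0∞)^2 ∂P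
        + ENNReal.ofReal l * ∫⁻ ω, W ω * ((Z k ω : ℕ) : ℝ≥0∞) ∂P := by
  have hZk : Measurable (Z k) :=
    (gwZ_measF hZ0 hZrec le_rfl).mono (gwF_le hXmeas k) le_rfl
  have hWa : Measurable W := hW.mono (gwF_le hXmeas k) le_rfl
  set L := ENNReal.ofReal l with hL
  have h := gw_step hXmeas hXindep hZ0 hZrec k hW (fun n => ((n : ℕ) : ℝ≥0∞)^2)
  rw [h, tsum_congr (fun n => by
    rw [gw_lintegral_T_sq hXmeas hXindep hl hXlaw k n] :
      ∀ n : ℕ, (∫⁻ ω, ({ω' | Z k ω' = n}.indicator W) ω ∂P)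
        * (∫⁻ ω, ((∑ i ∈ Finset.range n, X k i ω : ℕ) : ℝ≥0∞)^2 ∂P)
      = (∫⁻ ω, ({ω' | Z k ω' = n}.indicator W) ω ∂P)
        * ((n : ℝ≥0∞) * L + ((n : ℝ≥0∞) * L)^2)),
    gw_partition hWa hZk (fun n => (n : ℝ≥0∞) * L + ((n : ℝ≥0∞) * L)^2)]
  have hexp : ∀ ω, W ω * ((Z k ω : ℝ≥0∞) * L + ((Z k ω : ℝ≥0∞) * L)^2)
      = (W ω * ((Z k ω : ℕ) : ℝ≥0∞)^2) * L^2 + (W ω * ((Z k ω : ℕ) : ℝ≥0∞)) * L := by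
    intro ω; ring
  have hmZ : Measurable (fun ω => ((Z k ω : ℕ) : ℝ≥0∞)) := measurable_from_nat.comp hZk
  rw [lintegral_congr hexp,
    lintegral_add_left (f := fun ω => W ω * ((Z k ω : ℕ) : ℝ≥0∞)^2 * L^2)
      ((hWa.mul (hmZ.pow_const 2)).mul_const _),
    lintegral_mul_const (f := fun ω => W ω * ((Z k ω : ℕ) : ℝ≥0∞)^2) _
      (hWa.mul (hmZ.pow_const 2)),
    lintegral_mul_const (f := fun ω => W ω * ((Z k ω : ℕ) : ℝ≥0∞)) _ (hWa.mul hmZ)]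
  ring

end gw

/-- Let `λ ≥ 2` and `d ∈ ℕ`.  For a Galton–Watson process with
Poisson(`λ`) offspring (generation sizes `Z 0 = 1`,
`Z (k+1) = Σ_{i < Z k} X k i` for an i.i.d. family `X k i ~ Poisson(λ)`), the total
population `Z̃_d = Σ_{k ≤ d} Z k` satisfies
`λ^(2d) ≤ E[(Z̃_d)²] ≤ 2·(λ/(λ−1))³·λ^(2d) ≤ 16·λ^(2d)`. -/
theorem galtonWatson_poisson_total_population_second_moment
    {Ω : Type*} [MeasurableSpace Ω] (P : Measure Ω) [IsProbabilityMeasure P]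
    (l : ℝ) (hl : 2 ≤ l) (d : ℕ)
    (X : ℕ → ℕ → Ω → ℕ)
    (hXmeas : ∀ k i, Measurable (X k i))
    -- the family `(X k i)` is i.i.d. with Poisson(`λ`) marginals
    (hXindep : iIndepFun
      (fun p : ℕ × ℕ => X p.1 p.2) P)
    (hXlaw : ∀ k i, ∀ s : ℕ, P.map (X k i) {s} =
      ENNReal.ofReal (Real.exp (-l) * l ^ s / (s.factorial : ℝ)))
    -- generation sizes of the Galton–Watson process
    (Z : ℕ → Ω → ℕ)
    (hZ0 : ∀ ω, Z 0 ω = 1)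
    (hZrec : ∀ k ω, Z (k + 1) ω = ∑ i ∈ Finset.range (Z k ω), X k i ω) :
    l ^ (2 * d) ≤ (∫ ω, (((∑ k ∈ Finset.range (d + 1), Z k ω : ℕ) : ℝ)) ^ 2 ∂P) ∧
      (∫ ω, (((∑ k ∈ Finset.range (d + 1), Z k ω : ℕ) : ℝ)) ^ 2 ∂P) ≤
        2 * (l / (l - 1)) ^ 3 * l ^ (2 * d) ∧
      2 * (l / (l - 1)) ^ 3 * l ^ (2 * d) ≤ 16 * l ^ (2 * d) := by
  classical
  have hl0 : (0:ℝ) < l := by linarith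
  have hl1 : (1:ℝ) < l := by linarith
  have hc0 : (0:ℝ) < l - 1 := by linarith
  set L := ENNReal.ofReal l with hLdef
  have hLne : L ≠ ⊤ := ENNReal.ofReal_ne_top
  have hXlaw' : ∀ k i (s : ℕ), P.map (X k i) {s} = ENNReal.ofReal (gwA l s) := fun k i s =>
    hXlaw k i s
  have hZmeas : ∀ k, Measurable (Z k) := fun k =>
    (gwZ_measF hZ0 hZrec le_rfl).mono (gwF_le hXmeas k) le_rfl
  have hmZ : ∀ k, Measurable (fun ω => ((Z k ω : ℕ) : ℝ≥0∞)) := fun k =>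
    measurable_from_nat.comp (hZmeas k)
  -- first moments
  have hM : ∀ k, ∫⁻ ω, ((Z k ω : ℕ) : ℝ≥0∞) ∂P = L ^ k := by
    intro k; induction k with
    | zero =>
      have h1 : ∀ ω, ((Z 0 ω : ℕ) : ℝ≥0∞) = 1 := fun ω => by rw [hZ0 ω]; norm_num
      rw [lintegral_congr h1, lintegral_one, measure_univ, pow_zero]
    | succ k ih =>
      have h := gw_E1 hXmeas hXindep hl hXlaw' hZ0 hZrec k
        (W := fun _ => (1:ℝ≥0∞)) measurable_const
      simp only [one_mul] at h
      rw [h, ih, pow_succ, mul_comm]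
  -- second moments
  have hS0 : ∫⁻ ω, ((Z 0 ω : ℕ) : ℝ≥0∞)^2 ∂P = 1 := by
    have h1 : ∀ ω, ((Z 0 ω : ℕ) : ℝ≥0∞)^2 = 1 := fun ω => by rw [hZ0 ω]; norm_num
    rw [lintegral_congr h1, lintegral_one, measure_univ]
  have hSrec : ∀ k, ∫⁻ ω, ((Z (k+1) ω : ℕ) : ℝ≥0∞)^2 ∂P
      = L^2 * ∫⁻ ω, ((Z k ω : ℕ) : ℝ≥0∞)^2 ∂P + L^(k+1) := by
    intro k
    have h := gw_E2 hXmeas hXindep hl hXlaw' hZ0 hZrec k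
      (W := fun _ => (1:ℝ≥0∞)) measurable_const
    simp only [one_mul] at h
    rw [h, hM k]; ring
  have hSfin : ∀ k, ∫⁻ ω, ((Z k ω : ℕ) : ℝ≥0∞)^2 ∂P ≠ ⊤ := by
    intro k; induction k with
    | zero => rw [hS0]; exact ENNReal.one_ne_top
    | succ k ih =>
      rw [hSrec k]
      exact ENNReal.add_ne_top.2
        ⟨ENNReal.mul_ne_top (ENNReal.pow_ne_top hLne) ih, ENNReal.pow_ne_top hLne⟩
  -- cross moments
  have hCross : ∀ j t, ∫⁻ ω, ((Z j ω : ℕ) : ℝ≥0∞) * ((Z (j+t) ω : ℕ) : ℝ≥0∞) ∂P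
      = L^t * ∫⁻ ω, ((Z j ω : ℕ) : ℝ≥0∞)^2 ∂P := by
    intro j t; induction t with
    | zero =>
      rw [pow_zero, one_mul]
      exact lintegral_congr fun ω => (pow_two _).symm
    | succ t ih =>
      have hWmeas : Measurable[gwF X (j+t)] (fun ω => ((Z j ω : ℕ) : ℝ≥0∞)) :=
        Measurable.comp (measurable_from_nat)
          (gwZ_measF hZ0 hZrec (Nat.le_add_right j t))
      have h := gw_E1 hXmeas hXindep hl hXlaw' hZ0 hZrec (j+t) hWmeas
      rw [show j + (t+1) = (j+t)+1 from rfl, h, ih, pow_succ]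
      ring
  -- real versions
  set σ : ℕ → ℝ := fun k => (∫⁻ ω, ((Z k ω : ℕ) : ℝ≥0∞)^2 ∂P).toReal with hσdef
  have hσ0 : σ 0 = 1 := by rw [hσdef]; simp [hS0]
  have hσrec : ∀ k, σ (k+1) = l^2 * σ k + l^(k+1) := by
    intro k
    rw [hσdef]
    simp only
    rw [hSrec k, ENNReal.toReal_add (ENNReal.mul_ne_top (ENNReal.pow_ne_top hLne) (hSfin k))
      (ENNReal.pow_ne_top hLne), ENNReal.toReal_mul, ENNReal.toReal_pow, ENNReal.toReal_pow,
      ENNReal.toReal_ofReal hl0.le]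
  have hσclosed : ∀ k, (l-1) * σ k = l * (l^k)^2 - l^k := by
    intro k; induction k with
    | zero => rw [hσ0]; ring
    | succ k ih =>
      rw [hσrec k, pow_succ]
      linear_combination l^2 * ih
  have hσpos : ∀ k, 0 ≤ σ k := fun k => ENNReal.toReal_nonneg
  have hσub : ∀ k, σ k ≤ l * (l^k)^2 / (l-1) := by
    intro k
    rw [le_div_iff₀ hc0, mul_comm (σ k) (l-1), hσclosed k]
    have : (0:ℝ) < l^k := pow_pos hl0 k
    linarith
  have hσlb : ∀ k, (l^k)^2 ≤ σ k := by
    intro k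
    have h1 : (1:ℝ) ≤ l^k := one_le_pow₀ hl1.le
    have h2 := hσclosed k
    nlinarith

  have hσapp : ∀ k, (∫⁻ ω, ((Z k ω : ℕ) : ℝ≥0∞)^2 ∂P).toReal = σ k := fun k => rfl
  -- finiteness and bound for cross moments
  have hCrossFin : ∀ j k : ℕ,
      ∫⁻ ω, ((Z j ω : ℕ) : ℝ≥0∞) * ((Z k ω : ℕ) : ℝ≥0∞) ∂P ≠ ⊤ := by
    have haux : ∀ j t : ℕ,
        ∫⁻ ω, ((Z j ω : ℕ) : ℝ≥0∞) * ((Z (j+t) ω : ℕ) : ℝ≥0∞) ∂P ≠ ⊤ := by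
      intro j t; rw [hCross j t]
      exact ENNReal.mul_ne_top (ENNReal.pow_ne_top hLne) (hSfin j)
    intro j k
    rcases le_total j k with h' | h'
    · obtain ⟨t, rfl⟩ : ∃ t, k = j + t := ⟨k - j, by omega⟩
      exact haux j t
    · obtain ⟨t, rfl⟩ : ∃ t, j = k + t := ⟨j - k, by omega⟩
      rw [lintegral_congr (fun ω => mul_comm _ _)]
      exact haux k t
  have hγub : ∀ j k : ℕ,
      (∫⁻ ω, ((Z j ω : ℕ) : ℝ≥0∞) * ((Z k ω : ℕ) : ℝ≥0∞) ∂P).toReal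
        ≤ l^(j+k+1) / (l-1) := by
    have haux : ∀ j t : ℕ,
        (∫⁻ ω, ((Z j ω : ℕ) : ℝ≥0∞) * ((Z (j+t) ω : ℕ) : ℝ≥0∞) ∂P).toReal
          ≤ l^(j+(j+t)+1) / (l-1) := by
      intro j t
      rw [hCross j t, ENNReal.toReal_mul, ENNReal.toReal_pow, ENNReal.toReal_ofReal hl0.le,
        hσapp j]
      have hp : (0:ℝ) ≤ l^t := (pow_pos hl0 t).le
      have h1 : l^t * σ j ≤ l^t * (l * (l^j)^2 / (l-1)) :=
        mul_le_mul_of_nonneg_left (hσub j) hp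
      have hexp : l^t * (l * (l^j)^2 / (l-1)) = l^(j+(j+t)+1) / (l-1) := by
        rw [show j+(j+t)+1 = t+(1+(j+j)) from by omega, pow_add, pow_add, pow_add, pow_one,
          pow_two]
        ring
      linarith
    intro j k
    rcases le_total j k with h' | h'
    · obtain ⟨t, rfl⟩ : ∃ t, k = j + t := ⟨k - j, by omega⟩
      exact haux j t
    · obtain ⟨t, rfl⟩ : ∃ t, j = k + t := ⟨j - k, by omega⟩
      rw [lintegral_congr (fun ω => mul_comm _ _),
        show k+t+k+1 = k+(k+t)+1 from by omega]
      exact haux k t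
  -- diagonal value
  have hγdd : (∫⁻ ω, ((Z d ω : ℕ) : ℝ≥0∞) * ((Z d ω : ℕ) : ℝ≥0∞) ∂P).toReal = σ d := by
    rw [lintegral_congr (fun ω => (pow_two ((Z d ω : ℕ) : ℝ≥0∞)).symm), hσapp d]
  -- expand the square of the total population
  have hNmeas : Measurable (fun ω => (∑ k ∈ Finset.range (d+1), Z k ω : ℕ)) :=
    Finset.measurable_sum _ (fun k _ => hZmeas k)
  have hexpand : ∫⁻ ω, (((∑ k ∈ Finset.range (d+1), Z k ω : ℕ) : ℝ≥0∞))^2 ∂P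
      = ∑ j ∈ Finset.range (d+1), ∑ k ∈ Finset.range (d+1),
          ∫⁻ ω, ((Z j ω : ℕ) : ℝ≥0∞) * ((Z k ω : ℕ) : ℝ≥0∞) ∂P := by
    have hpt : ∀ ω, (((∑ k ∈ Finset.range (d+1), Z k ω : ℕ) : ℝ≥0∞))^2
        = ∑ j ∈ Finset.range (d+1), ∑ k ∈ Finset.range (d+1),
            ((Z j ω : ℕ) : ℝ≥0∞) * ((Z k ω : ℕ) : ℝ≥0∞) := by
      intro ω
      rw [pow_two, Nat.cast_sum, Finset.sum_mul_sum]
    rw [lintegral_congr hpt,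
      lintegral_finset_sum _ (f := fun j ω => ∑ k ∈ Finset.range (d+1),
          ((Z j ω : ℕ) : ℝ≥0∞) * ((Z k ω : ℕ) : ℝ≥0∞))
        (fun j _ => Finset.measurable_sum _ (fun k _ => (hmZ j).mul (hmZ k)))]
    exact Finset.sum_congr rfl fun j _ =>
      lintegral_finset_sum _ (fun k _ => (hmZ j).mul (hmZ k))
  -- identify the Bochner integral with the double sum
  have hNr : Measurable (fun ω => ((∑ k ∈ Finset.range (d+1), Z k ω : ℕ) : ℝ)) :=
    measurable_from_nat.comp hNmeas
  have hint : (∫ ω, (((∑ k ∈ Finset.range (d + 1), Z k ω : ℕ) : ℝ)) ^ 2 ∂P)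
      = (∑ j ∈ Finset.range (d+1), ∑ k ∈ Finset.range (d+1),
          ∫⁻ ω, ((Z j ω : ℕ) : ℝ≥0∞) * ((Z k ω : ℕ) : ℝ≥0∞) ∂P).toReal := by
    rw [← hexpand,
      MeasureTheory.integral_eq_lintegral_of_nonneg_ae
        (Filter.Eventually.of_forall fun ω => sq_nonneg _)
        ((hNr.pow_const 2).aestronglyMeasurable)]
    congr 1
    refine lintegral_congr fun ω => ?_
    rw [ENNReal.ofReal_pow (Nat.cast_nonneg _), ENNReal.ofReal_natCast]
  have htsum : (∑ j ∈ Finset.range (d+1), ∑ k ∈ Finset.range (d+1),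
        ∫⁻ ω, ((Z j ω : ℕ) : ℝ≥0∞) * ((Z k ω : ℕ) : ℝ≥0∞) ∂P).toReal
      = ∑ j ∈ Finset.range (d+1), ∑ k ∈ Finset.range (d+1),
          (∫⁻ ω, ((Z j ω : ℕ) : ℝ≥0∞) * ((Z k ω : ℕ) : ℝ≥0∞) ∂P).toReal := by
    rw [ENNReal.toReal_sum (fun j _ => ENNReal.sum_ne_top.2 (fun k _ => hCrossFin j k))]
    exact Finset.sum_congr rfl fun j _ => ENNReal.toReal_sum fun k _ => hCrossFin j k
  have hq0 : (0:ℝ) ≤ l/(l-1) := by positivity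
  have hp2d : (0:ℝ) < l^(2*d) := pow_pos hl0 _
  refine ⟨?_, ?_, ?_⟩
  · -- lower bound
    rw [hint, htsum]
    have hdm : d ∈ Finset.range (d+1) := Finset.self_mem_range_succ d
    calc l^(2*d) = (l^d)^2 := by rw [← pow_mul, Nat.mul_comm]
      _ ≤ σ d := hσlb d
      _ = (∫⁻ ω, ((Z d ω : ℕ) : ℝ≥0∞) * ((Z d ω : ℕ) : ℝ≥0∞) ∂P).toReal := hγdd.symm
      _ ≤ ∑ k ∈ Finset.range (d+1),
            (∫⁻ ω, ((Z d ω : ℕ) : ℝ≥0∞) * ((Z k ω : ℕ) : ℝ≥0∞) ∂P).toReal :=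
          Finset.single_le_sum
            (f := fun k => (∫⁻ ω, ((Z d ω : ℕ) : ℝ≥0∞) * ((Z k ω : ℕ) : ℝ≥0∞) ∂P).toReal)
            (fun k _ => ENNReal.toReal_nonneg) hdm
      _ ≤ ∑ j ∈ Finset.range (d+1), ∑ k ∈ Finset.range (d+1),
            (∫⁻ ω, ((Z j ω : ℕ) : ℝ≥0∞) * ((Z k ω : ℕ) : ℝ≥0∞) ∂P).toReal :=
          Finset.single_le_sum
            (f := fun j => ∑ k ∈ Finset.range (d+1),
              (∫⁻ ω, ((Z j ω : ℕ) : ℝ≥0∞) * ((Z k ω : ℕ) : ℝ≥0∞) ∂P).toReal)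
            (fun j _ => Finset.sum_nonneg fun k _ => ENNReal.toReal_nonneg) hdm
  · -- upper bound
    rw [hint, htsum]
    have hG0 : (0:ℝ) ≤ ∑ k ∈ Finset.range (d+1), l^k :=
      Finset.sum_nonneg fun k _ => (pow_pos hl0 k).le
    have hG : ∑ k ∈ Finset.range (d+1), l^k ≤ l^(d+1)/(l-1) := by
      rw [geom_sum_eq (ne_of_gt hl1) (d+1)]
      apply div_le_div_of_nonneg_right ?_ hc0.le
      linarith [pow_pos hl0 (d+1)]
    have hsplit : ∀ j k : ℕ, l^(j+k+1)/(l-1) = l^j * (l^k * (l/(l-1))) := by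
      intro j k
      rw [pow_succ, pow_add]
      ring
    calc ∑ j ∈ Finset.range (d+1), ∑ k ∈ Finset.range (d+1),
            (∫⁻ ω, ((Z j ω : ℕ) : ℝ≥0∞) * ((Z k ω : ℕ) : ℝ≥0∞) ∂P).toReal
        ≤ ∑ j ∈ Finset.range (d+1), ∑ k ∈ Finset.range (d+1), l^(j+k+1)/(l-1) :=
          Finset.sum_le_sum fun j _ => Finset.sum_le_sum fun k _ => hγub j k
      _ = ∑ j ∈ Finset.range (d+1), ∑ k ∈ Finset.range (d+1), l^j * (l^k * (l/(l-1))) :=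
          Finset.sum_congr rfl fun j _ => Finset.sum_congr rfl fun k _ => hsplit j k
      _ = (∑ j ∈ Finset.range (d+1), l^j) * ((∑ k ∈ Finset.range (d+1), l^k) * (l/(l-1))) := by
          refine Eq.trans (Finset.sum_congr rfl fun j _ => ?_) (Finset.sum_mul _ _ _).symm
          rw [← Finset.mul_sum, ← Finset.sum_mul]
      _ ≤ (l^(d+1)/(l-1)) * ((l^(d+1)/(l-1)) * (l/(l-1))) := by
          have h1 : (∑ k ∈ Finset.range (d+1), l^k) * (l/(l-1))
              ≤ (l^(d+1)/(l-1)) * (l/(l-1)) := mul_le_mul_of_nonneg_right hG hq0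
          have h2 : (0:ℝ) ≤ (l^(d+1)/(l-1)) * (l/(l-1)) := by positivity
          calc (∑ j ∈ Finset.range (d+1), l^j)
                  * ((∑ k ∈ Finset.range (d+1), l^k) * (l/(l-1)))
              ≤ (∑ j ∈ Finset.range (d+1), l^j) * ((l^(d+1)/(l-1)) * (l/(l-1))) :=
                mul_le_mul_of_nonneg_left h1 hG0
            _ ≤ (l^(d+1)/(l-1)) * ((l^(d+1)/(l-1)) * (l/(l-1))) :=
                mul_le_mul_of_nonneg_right hG h2
      _ ≤ 2 * (l / (l - 1)) ^ 3 * l ^ (2 * d) := by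
          have e1 : l^(d+1) = l * l^d := by rw [pow_succ]; ring
          have e2 : l^(2*d) = l^d * l^d := by rw [two_mul, pow_add]
          have heq : (l^(d+1)/(l-1)) * ((l^(d+1)/(l-1)) * (l/(l-1)))
              = (l/(l-1))^3 * l^(2*d) := by
            rw [e1, e2]
            field_simp
          rw [heq, e2]
          have hd0 : (0:ℝ) < l^d := pow_pos hl0 d
          nlinarith [pow_nonneg hq0 3]
  · -- last inequality
    have hq : l/(l-1) ≤ 2 := by rw [div_le_iff₀ hc0]; linarith
    have h8 : (l/(l-1))^3 ≤ 8 := by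
      nlinarith [hq, hq0, sq_nonneg (l/(l-1)), mul_nonneg hq0 hq0,
        mul_nonneg (mul_nonneg hq0 hq0) hq0]
    nlinarith [mul_le_mul_of_nonneg_right h8 hp2d.le]
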